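/- Let 0<p<1 and A ⊆ R^n. If 0 ∈ p-conv(A), then there exist points P_1,...,P_k ∈ A with k ≤ n+1 such that 0 ∈ p-conv({P_1,...,P_k}). -/

import Mathlib

open Finset

def PConvex {X : Type*} [AddCommGroup X] [Module ℝ X] (p : ℝ) (S : Set X) : Prop :=
  ∀ x ∈ S, ∀ y ∈ S, ∀ a b : ℝ, 0 ≤ a → 0 ≤ b → a ^ p + b ^ p = 1 → a • x + b • y ∈ S

def pConvHull {X : Type*} [AddCommGroup X] [Module ℝ X] (p : ℝ) (A : Set X) : Set X :=
  ⋂₀ {S : Set X | PConvex p S ∧ A ⊆ S}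

/-- A p-convex set contains all p-convex combinations of its elements. -/
lemma pconv_sum_mem {X : Type*} [AddCommGroup X] [Module ℝ X] {p : ℝ} (hp0 : 0 < p)
    {S : Set X} (hS : PConvex p S) {ι : Type*} (s : Finset ι) (v : ι → X) (l : ι → ℝ)
    (hv : ∀ i ∈ s, v i ∈ S) (hl : ∀ i ∈ s, 0 ≤ l i) (hsum : ∑ i ∈ s, l i ^ p = 1) :
    ∑ i ∈ s, l i • v i ∈ S := by
  classical
  induction s using Finset.cons_induction generalizing l with
  | empty => simp at hsum
  | cons a s ha ih =>
    rw [Finset.sum_cons] at hsum ⊢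
    have hla : 0 ≤ l a := hl a (Finset.mem_cons_self a s)
    have hva : v a ∈ S := hv a (Finset.mem_cons_self a s)
    have hl' : ∀ i ∈ s, 0 ≤ l i := fun i hi => hl i (Finset.mem_cons.2 (Or.inr hi))
    have hv' : ∀ i ∈ s, v i ∈ S := fun i hi => hv i (Finset.mem_cons.2 (Or.inr hi))
    set r : ℝ := ∑ i ∈ s, l i ^ p with hr
    have hrnn : 0 ≤ r := Finset.sum_nonneg fun i hi =>
      Real.rpow_nonneg (hl' i hi) p
    rcases eq_or_lt_of_le hrnn with hr0 | hrpos
    · -- all inner coefficients zero, l a = 1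
      have hall : ∀ i ∈ s, l i = 0 := by
        intro i hi
        have := (Finset.sum_eq_zero_iff_of_nonneg fun j hj =>
          Real.rpow_nonneg (hl' j hj) p).1 hr0.symm i hi
        exact (Real.rpow_eq_zero (hl' i hi) hp0.ne').1 this
      have hsz : ∑ i ∈ s, l i • v i = 0 := by
        apply Finset.sum_eq_zero; intro i hi; rw [hall i hi, zero_smul]
      have hla1 : l a = 1 := by
        have h1 : l a ^ p = 1 := by rw [← hr0, add_zero] at hsum; exact hsum
        have := Real.rpow_left_injOn hp0.ne' (by exact hla : l a ∈ {y : ℝ | 0 ≤ y})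
          (by norm_num : (1:ℝ) ∈ {y : ℝ | 0 ≤ y})
        apply this; simpa [Real.one_rpow] using h1
      rw [hsz, add_zero, hla1, one_smul]; exact hva
    · -- split off the first point
      set T : ℝ := r ^ (1/p : ℝ) with hT
      have hTpos : 0 < T := Real.rpow_pos_of_pos hrpos _
      have hTp : T ^ p = r := by
        rw [hT, one_div, Real.rpow_inv_rpow hrnn hp0.ne']
      have hy : ∑ i ∈ s, (l i / T) • v i ∈ S := by
        apply ih _ hv' (fun i hi => div_nonneg (hl' i hi) hTpos.le)
        have h2 : ∀ i ∈ s, (l i / T) ^ p = l i ^ p / r := by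
          intro i hi
          rw [Real.div_rpow (hl' i hi) hTpos.le, hTp]
        rw [Finset.sum_congr rfl h2, ← Finset.sum_div, ← hr, div_self hrpos.ne']
      have key := hS _ hva _ hy (l a) T hla hTpos.le (by rw [hTp]; exact hsum)
      have h3 : T • ∑ i ∈ s, (l i / T) • v i = ∑ i ∈ s, l i • v i := by
        rw [Finset.smul_sum]
        apply Finset.sum_congr rfl
        intro i hi
        rw [smul_smul, mul_div_cancel₀ _ hTpos.ne']
      rwa [h3] at key

/-- Every element of the p-convex hull is a p-convex combination of points of A. -/
lemma exists_rep_of_mem_pconvHull {X : Type*} [AddCommGroup X] [Module ℝ X] {p : ℝ}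
    (hp0 : 0 < p) {A : Set X} {x : X} (hx : x ∈ pConvHull p A) :
    ∃ (k : ℕ) (v : Fin k → X) (l : Fin k → ℝ), (∀ i, v i ∈ A) ∧ (∀ i, 0 ≤ l i) ∧
      (∑ i, l i ^ p = 1) ∧ x = ∑ i, l i • v i := by
  classical
  set T : Set X := {x | ∃ (k : ℕ) (v : Fin k → X) (l : Fin k → ℝ), (∀ i, v i ∈ A) ∧
      (∀ i, 0 ≤ l i) ∧ (∑ i, l i ^ p = 1) ∧ x = ∑ i, l i • v i} with hTdef
  have hTA : A ⊆ T := by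
    intro a ha
    exact ⟨1, fun _ => a, fun _ => 1, fun _ => ha, fun _ => zero_le_one,
      by simp [Real.one_rpow], by simp⟩
  have hTpc : PConvex p T := by
    rintro x ⟨k₁, v₁, l₁, hv₁, hl₁, hs₁, rfl⟩ y ⟨k₂, v₂, l₂, hv₂, hl₂, hs₂, rfl⟩
      a b haa hbb hab
    refine ⟨k₁ + k₂, Fin.append v₁ v₂,
      Fin.append (fun i => a * l₁ i) (fun i => b * l₂ i), ?_, ?_, ?_, ?_⟩
    · intro i
      refine Fin.addCases (fun j => ?_) (fun j => ?_) i
      · rw [Fin.append_left]; exact hv₁ _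
      · rw [Fin.append_right]; exact hv₂ _
    · intro i
      refine Fin.addCases (fun j => ?_) (fun j => ?_) i
      · rw [Fin.append_left]; exact mul_nonneg haa (hl₁ _)
      · rw [Fin.append_right]; exact mul_nonneg hbb (hl₂ _)
    · rw [Fin.sum_univ_add]
      simp only [Fin.append_left, Fin.append_right]
      have e1 : ∀ i : Fin k₁, (a * l₁ i) ^ p = a ^ p * l₁ i ^ p := fun i =>
        Real.mul_rpow haa (hl₁ i)
      have e2 : ∀ i : Fin k₂, (b * l₂ i) ^ p = b ^ p * l₂ i ^ p := fun i =>
        Real.mul_rpow hbb (hl₂ i)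
      rw [Finset.sum_congr rfl (fun i _ => e1 i), Finset.sum_congr rfl (fun i _ => e2 i),
        ← Finset.mul_sum, ← Finset.mul_sum, hs₁, hs₂, mul_one, mul_one, hab]
    · rw [Fin.sum_univ_add]
      simp only [Fin.append_left, Fin.append_right, Finset.smul_sum, mul_smul]
  exact hx T ⟨hTpc, hTA⟩

/-- Carathéodory-type reduction for nontrivial nonnegative relations. -/
lemma reduce_card {n : ℕ} (N : ℕ) : ∀ (s : Finset (Fin n → ℝ)), s.card ≤ N →
    ∀ (μ : (Fin n → ℝ) → ℝ), (∀ x ∈ s, 0 ≤ μ x) → (∃ x ∈ s, 0 < μ x) →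
    (∑ x ∈ s, μ x • x = 0) →
    ∃ t ⊆ s, t.card ≤ n + 1 ∧ ∃ ν : (Fin n → ℝ) → ℝ, (∀ x ∈ t, 0 ≤ ν x) ∧
      (∃ x ∈ t, 0 < ν x) ∧ ∑ x ∈ t, ν x • x = 0 := by
  classical
  induction N with
  | zero =>
    intro s hcard μ _ ⟨x, hx, _⟩ _
    rw [Nat.le_zero, Finset.card_eq_zero] at hcard
    subst hcard; exact absurd hx (Finset.notMem_empty x)
  | succ N ih =>
    intro s hcard μ hμ0 hμpos hμsum
    by_cases hsmall : s.card ≤ n + 1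
    · exact ⟨s, subset_rfl, hsmall, μ, hμ0, hμpos, hμsum⟩
    push_neg at hsmall
    -- restrict to the support
    set s' : Finset (Fin n → ℝ) := s.filter (fun x => 0 < μ x) with hs'
    have hs's : s' ⊆ s := Finset.filter_subset _ _
    have hsum' : ∑ x ∈ s', μ x • x = ∑ x ∈ s, μ x • x := by
      apply Finset.sum_filter_of_ne
      intro x hx hne
      rcases lt_or_eq_of_le (hμ0 x hx) with h | h
      · exact h
      · exact absurd (by rw [← h, zero_smul]) hne
    by_cases hssub : s'.card < s.card
    · obtain ⟨x, hxs, hx⟩ := hμpos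
      have hxs' : x ∈ s' := Finset.mem_filter.2 ⟨hxs, hx⟩
      obtain ⟨t, hts, htc, hν⟩ := ih s' (by omega) μ (fun x hx => hμ0 x (hs's hx))
        ⟨x, hxs', hx⟩ (by rw [hsum']; exact hμsum)
      exact ⟨t, hts.trans hs's, htc, hν⟩
    -- otherwise every coefficient on s is positive
    have hs'eq : s' = s := Finset.eq_of_subset_of_card_le hs's (by omega)
    have hμall : ∀ x ∈ s, 0 < μ x := by
      intro x hx; rw [← hs'eq] at hx; exact (Finset.mem_filter.1 hx).2
    obtain ⟨x₀, hx₀⟩ : s.Nonempty := Finset.card_pos.1 (by omega)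
    -- a nontrivial linear relation on s.erase x₀
    have hrank : Module.finrank ℝ (Fin n → ℝ) < (s.erase x₀).card := by
      rw [Module.finrank_fin_fun, Finset.card_erase_of_mem hx₀]; omega
    obtain ⟨f, hfsum, x₁, hx₁, hfx₁⟩ :=
      Module.exists_nontrivial_relation_of_finrank_lt_card hrank
    set c : (Fin n → ℝ) → ℝ := fun x => if x = x₀ then 0 else f x with hc
    have hcx₀ : c x₀ = 0 := by simp [hc]
    have hcsum : ∑ x ∈ s, c x • x = 0 := by
      rw [← Finset.add_sum_erase _ _ hx₀, hcx₀, zero_smul, zero_add]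
      rw [← hfsum]
      apply Finset.sum_congr rfl
      intro x hx
      have : x ≠ x₀ := Finset.ne_of_mem_erase hx
      simp [hc, this]
    have hcx₁ : c x₁ ≠ 0 := by
      have : x₁ ≠ x₀ := Finset.ne_of_mem_erase hx₁
      simpa [hc, this] using hfx₁
    have hx₁s : x₁ ∈ s := Finset.mem_of_mem_erase hx₁
    -- WLOG some coefficient is positive
    obtain ⟨d, hdx₀, hdsum, x₂, hx₂s, hx₂pos⟩ :
        ∃ d : (Fin n → ℝ) → ℝ, d x₀ = 0 ∧ (∑ x ∈ s, d x • x = 0) ∧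
          ∃ x ∈ s, 0 < d x := by
      rcases lt_or_gt_of_ne hcx₁ with h | h
      · refine ⟨fun x => -(c x), by simp [hcx₀], ?_, x₁, hx₁s, neg_pos.2 h⟩
        simp only [neg_smul, Finset.sum_neg_distrib, hcsum, neg_zero]
      · exact ⟨c, hcx₀, hcsum, x₁, hx₁s, h⟩
    set sPos : Finset (Fin n → ℝ) := s.filter (fun x => 0 < d x) with hsPos
    have hne : sPos.Nonempty := ⟨x₂, Finset.mem_filter.2 ⟨hx₂s, hx₂pos⟩⟩
    obtain ⟨j, hj, hjval⟩ := Finset.exists_mem_eq_inf' hne (fun x => μ x / d x)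
    have hjs : j ∈ s := (Finset.mem_filter.1 hj).1
    have hdj : 0 < d j := (Finset.mem_filter.1 hj).2
    set t0 : ℝ := sPos.inf' hne (fun x => μ x / d x) with ht0
    have ht0val : t0 = μ j / d j := hjval
    have ht0nn : 0 ≤ t0 := by
      rw [ht0val]; exact div_nonneg (hμall j hjs).le hdj.le
    set ν : (Fin n → ℝ) → ℝ := fun x => μ x - t0 * d x with hν
    have hνnn : ∀ x ∈ s, 0 ≤ ν x := by
      intro x hx
      by_cases hdx : 0 < d x
      · have hxP : x ∈ sPos := Finset.mem_filter.2 ⟨hx, hdx⟩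
        have hle : t0 ≤ μ x / d x := Finset.inf'_le _ hxP
        have h2 := (le_div_iff₀ hdx).1 hle
        simp only [hν]; linarith
      · push_neg at hdx
        have : t0 * d x ≤ 0 := mul_nonpos_of_nonneg_of_nonpos ht0nn hdx
        have := hμ0 x hx
        simp only [hν]; linarith
    have hνj : ν j = 0 := by
      simp only [hν, ht0val]
      field_simp
      ring
    have hνx₀ : 0 < ν x₀ := by
      simp only [hν, hdx₀, mul_zero, sub_zero]
      exact hμall x₀ hx₀
    have hνsum : ∑ x ∈ s, ν x • x = 0 := by
      have : ∀ x ∈ s, ν x • x = μ x • x - t0 • (d x • x) := by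
        intro x hx
        simp only [hν, sub_smul, smul_smul]
      rw [Finset.sum_congr rfl this, Finset.sum_sub_distrib, ← Finset.smul_sum,
        hdsum, hμsum, smul_zero, sub_zero]
    have hjx₀ : j ≠ x₀ := by
      intro h; rw [h, hdx₀] at hdj; exact lt_irrefl 0 hdj
    have hx₀e : x₀ ∈ s.erase j := Finset.mem_erase.2 ⟨Ne.symm hjx₀, hx₀⟩
    have hesum : ∑ x ∈ s.erase j, ν x • x = 0 := by
      rw [← Finset.add_sum_erase _ _ hjs, hνj, zero_smul, zero_add] at hνsum
      exact hνsum
    obtain ⟨t, hts, htc, hν'⟩ := ih (s.erase j)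
      (by rw [Finset.card_erase_of_mem hjs]; omega) ν
      (fun x hx => hνnn x (Finset.mem_of_mem_erase hx))
      ⟨x₀, hx₀e, hνx₀⟩ hesum
    exact ⟨t, hts.trans (Finset.erase_subset _ _), htc, hν'⟩

theorem caratheodory_pconv_zero (p : ℝ) (hp0 : 0 < p) (hp1 : p < 1) (n : ℕ)
    (A : Set (Fin n → ℝ)) (h0 : (0 : Fin n → ℝ) ∈ pConvHull p A) :
    ∃ (k : ℕ) (_ : k ≤ n + 1) (P : Fin k → (Fin n → ℝ)),
      (∀ i, P i ∈ A) ∧ (0 : Fin n → ℝ) ∈ pConvHull p (Set.range P) := by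
  classical
  obtain ⟨k, v, l, hvA, hl0, hlsum, hzero⟩ := exists_rep_of_mem_pconvHull hp0 h0
  set s : Finset (Fin n → ℝ) := Finset.image v Finset.univ with hsdef
  set μ : (Fin n → ℝ) → ℝ :=
    fun x => ∑ i ∈ Finset.univ.filter (fun i => v i = x), l i with hμdef
  have hμ0 : ∀ x ∈ s, 0 ≤ μ x := fun x _ => Finset.sum_nonneg fun i _ => hl0 i
  have hμsum : ∑ x ∈ s, μ x • x = 0 := by
    have h1 : ∀ x ∈ s, μ x • x = ∑ i ∈ Finset.univ.filter (fun i => v i = x), l i • v i := by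
      intro x hx
      rw [hμdef, Finset.sum_smul]
      exact Finset.sum_congr rfl fun i hi => by rw [(Finset.mem_filter.1 hi).2]
    rw [Finset.sum_congr rfl h1,
      Finset.sum_fiberwise_of_maps_to (fun i _ => Finset.mem_image_of_mem v (Finset.mem_univ i))]
    exact hzero.symm
  have hμpos : ∃ x ∈ s, 0 < μ x := by
    obtain ⟨i0, hi0⟩ : ∃ i, 0 < l i := by
      by_contra h
      push_neg at h
      have hall : ∀ i, l i = 0 := fun i => le_antisymm (h i) (hl0 i)
      rw [Finset.sum_congr rfl (fun i _ => by rw [hall i, Real.zero_rpow hp0.ne'])] at hlsum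
      simp at hlsum
    refine ⟨v i0, Finset.mem_image_of_mem v (Finset.mem_univ i0), ?_⟩
    exact lt_of_lt_of_le hi0 (Finset.single_le_sum (f := l) (fun i _ => hl0 i)
      (Finset.mem_filter.2 ⟨Finset.mem_univ _, rfl⟩))
  obtain ⟨t, hts, htc, ν, hν0, hνpos, hνsum⟩ :=
    reduce_card s.card s le_rfl μ hμ0 hμpos hμsum
  set P : Fin t.card → (Fin n → ℝ) := fun i => (t.equivFin.symm i : Fin n → ℝ) with hP
  have hPA : ∀ i, P i ∈ A := by
    intro i
    obtain ⟨j, _, hj⟩ := Finset.mem_image.1 (hts (t.equivFin.symm i).2)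
    simp only [hP]; rw [← hj]; exact hvA j
  have hrange : Set.range P = ↑t := by
    ext x
    constructor
    · rintro ⟨i, rfl⟩; exact (t.equivFin.symm i).2
    · intro hx
      exact ⟨t.equivFin ⟨x, hx⟩, by simp [hP]⟩
  refine ⟨t.card, htc, P, hPA, ?_⟩
  refine Set.mem_sInter.2 ?_
  rintro S ⟨hSpc, hSsub⟩
  rw [hrange] at hSsub
  obtain ⟨x₂, hx₂t, hx₂⟩ := hνpos
  set c : ℝ := ∑ x ∈ t, ν x ^ p with hcdef
  have hcpos : 0 < c := Finset.sum_pos' (fun x hx => Real.rpow_nonneg (hν0 x hx) p)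
    ⟨x₂, hx₂t, Real.rpow_pos_of_pos hx₂ p⟩
  set T : ℝ := c ^ (1/p : ℝ) with hT
  have hTpos : 0 < T := Real.rpow_pos_of_pos hcpos _
  have hTp : T ^ p = c := by rw [hT, one_div, Real.rpow_inv_rpow hcpos.le hp0.ne']
  have key := pconv_sum_mem hp0 hSpc t (fun x => x) (fun x => ν x / T)
    (fun x hx => hSsub hx) (fun x hx => div_nonneg (hν0 x hx) hTpos.le) ?_
  · have h2 : ∑ x ∈ t, (ν x / T) • x = (T⁻¹ : ℝ) • ∑ x ∈ t, ν x • x := by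
      rw [Finset.smul_sum]
      exact Finset.sum_congr rfl fun x hx => by rw [smul_smul, div_eq_inv_mul]
    rw [h2, hνsum, smul_zero] at key
    exact key
  · have h3 : ∀ x ∈ t, (ν x / T) ^ p = ν x ^ p / c := by
      intro x hx
      rw [Real.div_rpow (hν0 x hx) hTpos.le, hTp]
    rw [Finset.sum_congr rfl h3, ← Finset.sum_div, ← hcdef, div_self hcpos.ne']
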